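/- In a p-independent set system, let greedy run on a set and let A = {i_1,...,i_l} be its output (in inclusion order), with ignored elements partitioned into B_1,...,B_l, where B_j consists of elements ignored after i_1,...,i_j were added, each with weight at most w_{i_j}, and suppose fractional values q̃_i ∈ [0,1] on ignored elements satisfy Σ_{i ∈ B_1∪...∪B_j} q̃_i ≤ p·j for every j. Then Σ_{i ∈ U} q̃_i w_i ≤ p · Σ_{i∈A} w_i, where U = B_1∪...∪B_l. -/

import Mathlib

open Finset

lemma abel_aux (p : ℝ) (hp : 0 ≤ p) (s : ℕ → ℝ) (hs : ∀ j, 0 ≤ s j) :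
    ∀ (l : ℕ) (a : ℕ → ℝ), (∀ j, j < l → a (j+1) ≤ a j) → a l = 0 →
    (∀ j, j < l → ∑ k ∈ Finset.range (j+1), s k ≤ p * (j+1)) →
    ∑ j ∈ Finset.range l, s j * a j ≤ p * ∑ j ∈ Finset.range l, a j := by
  intro l
  induction l with
  | zero => simp
  | succ n ih =>
    intro a hmono hlast hS
    have hal : 0 ≤ a n := by
      have := hmono n (Nat.lt_succ_self n)
      rw [hlast] at this
      linarith
    set a' : ℕ → ℝ := fun j => a (min j n) - a n with ha'
    have key : ∑ j ∈ range n, s j * a' j ≤ p * ∑ j ∈ range n, a' j := by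
      apply ih
      · intro j hj
        simp only [ha', Nat.min_eq_left hj.le, Nat.min_eq_left (Nat.succ_le_of_lt hj)]
        have := hmono j (hj.trans (Nat.lt_succ_self n))
        linarith
      · simp [ha']
      · exact fun j hj => hS j (hj.trans (Nat.lt_succ_self n))
    have ha'eq : ∀ j ∈ range (n+1), s j * a j = s j * a' j + a n * s j := by
      intro j hj
      have : a' j = a j - a n := by
        simp [ha', Nat.min_eq_left (Nat.lt_succ_iff.mp (Finset.mem_range.mp hj))]
      rw [this]; ring
    have split : ∑ j ∈ range (n+1), s j * a j
        = ∑ j ∈ range n, s j * a' j + a n * ∑ j ∈ range (n+1), s j := by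
      rw [Finset.sum_congr rfl ha'eq, Finset.sum_add_distrib,
        Finset.sum_range_succ (fun j => s j * a' j), Finset.mul_sum]
      have : a' n = 0 := by simp [ha']
      rw [this]; ring
    have h2 : a n * ∑ j ∈ range (n+1), s j ≤ a n * (p * (n+1)) :=
      mul_le_mul_of_nonneg_left (hS n (Nat.lt_succ_self n)) hal
    have hsum' : ∑ j ∈ range n, a' j = ∑ j ∈ range n, a j - n * a n := by
      have h : ∀ j ∈ range n, a' j = a j - a n := fun j hj => by
        simp [ha', Nat.min_eq_left (Finset.mem_range.mp hj).le]
      rw [Finset.sum_congr rfl h, Finset.sum_sub_distrib]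
      simp
    rw [split]
    calc ∑ j ∈ range n, s j * a' j + a n * ∑ j ∈ range (n+1), s j
        ≤ p * ∑ j ∈ range n, a' j + a n * (p * (n+1)) := by linarith
      _ = p * (∑ j ∈ range n, a j + a n) := by rw [hsum']; push_cast; ring
      _ = p * ∑ x ∈ range (n+1), a x := by rw [Finset.sum_range_succ]

theorem abel_summation_greedy_bound {α : Type*} [DecidableEq α]
    (l : ℕ) (p : ℝ) (hp : 0 ≤ p)
    (wA : ℕ → ℝ) (B : ℕ → Finset α) (qt w : α → ℝ)
    (hwA0 : ∀ j, 0 ≤ wA j)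
    (hwAmono : ∀ j, j < l → wA (j + 1) ≤ wA j)
    (hwAlast : wA l = 0)
    (hdisj : ∀ j j', j < l → j' < l → j ≠ j' → Disjoint (B j) (B j'))
    (hq0 : ∀ i, 0 ≤ qt i) (hq1 : ∀ i, qt i ≤ 1)
    (hw : ∀ i, 0 ≤ w i)
    (hcap : ∀ j, j < l → ∀ i ∈ B j, w i ≤ wA j)
    (hfrac : ∀ j, j < l →
      ∑ i ∈ (Finset.range (j + 1)).biUnion B, qt i ≤ p * (j + 1)) :
    ∑ j ∈ Finset.range l, ∑ i ∈ B j, qt i * w i ≤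
      p * ∑ j ∈ Finset.range l, wA j := by
  set s : ℕ → ℝ := fun j => if j < l then ∑ i ∈ B j, qt i else 0 with hsdef
  have hs : ∀ j, 0 ≤ s j := by
    intro j
    simp only [hsdef]
    split
    · exact Finset.sum_nonneg fun i _ => hq0 i
    · exact le_refl 0
  have hS : ∀ j, j < l → ∑ k ∈ Finset.range (j+1), s k ≤ p * (j+1) := by
    intro j hj
    have heq : ∑ k ∈ Finset.range (j+1), s k
        = ∑ i ∈ (Finset.range (j + 1)).biUnion B, qt i := by
      rw [Finset.sum_biUnion]
      · apply Finset.sum_congr rfl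
        intro k hk
        have hkl : k < l := lt_of_lt_of_le (Finset.mem_range.mp hk) hj
        simp [hsdef, hkl]
      · intro x hx y hy hxy
        exact hdisj x y (lt_of_lt_of_le (Finset.mem_range.mp hx) hj)
          (lt_of_lt_of_le (Finset.mem_range.mp hy) hj) hxy
    rw [heq]
    exact hfrac j hj
  have step1 : ∑ j ∈ Finset.range l, ∑ i ∈ B j, qt i * w i
      ≤ ∑ j ∈ Finset.range l, s j * wA j := by
    apply Finset.sum_le_sum
    intro j hj
    have hjl : j < l := Finset.mem_range.mp hj
    simp only [hsdef, if_pos hjl]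
    rw [Finset.sum_mul]
    apply Finset.sum_le_sum
    intro i hi
    exact mul_le_mul_of_nonneg_left (hcap j hjl i hi) (hq0 i)
  exact step1.trans (abel_aux p hp s hs l wA hwAmono hwAlast hS)
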